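/- Let C, A_1, …, A_m be real symmetric n×n matrices, b, y ∈ ℝ^m, σ ≥ 0. Define Φ(X) = ⟨C, X⟩ − yᵀ(𝒜(X) − b) + (σ/2)‖𝒜(X) − b‖² with 𝒜(X) = (⟨A_i, X⟩)_i. Let Y ∈ ℝ^{n×p}, X = YYᵀ, S = C − Σ_i y_i A_i + σ Σ_i (⟨A_i, X⟩ − b_i)A_i, and let v ∈ ℝⁿ satisfy vᵀSv < 0. For t ∈ ℝ let Y_t = [Y, tv] ∈ ℝ^{n×(p+1)} denote the matrix obtained by appending the column tv to Y. Then for all t: Φ(Y_tY_tᵀ) = Φ(X) + t²·vᵀSv + (σ/2)t⁴‖𝒜(vvᵀ)‖², and consequently there exists ε > 0 such that Φ(Y_tY_tᵀ) < Φ(X) for all t with 0 < |t| < ε. -/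
import Mathlib


open Matrix BigOperators Finset

/-- Append a column `w` to an `n × p` matrix, producing an `n × (p+1)` matrix. -/
def appendCol {n p : ℕ} (Y : Matrix (Fin n) (Fin p) ℝ) (w : Fin n → ℝ) :
    Matrix (Fin n) (Fin (p + 1)) ℝ :=
  Matrix.of fun i => Fin.snoc (Y i) (w i)

theorem escape_saddle_point
    (n m p : ℕ)
    (C : Matrix (Fin n) (Fin n) ℝ) (A : Fin m → Matrix (Fin n) (Fin n) ℝ)
    (b y : Fin m → ℝ) (σ : ℝ) (hσ : 0 ≤ σ)
    (hC : C.IsSymm) (hA : ∀ i, (A i).IsSymm)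
    (Φ : Matrix (Fin n) (Fin n) ℝ → ℝ)
    (hΦ : ∀ X, Φ X = (C * X).trace - (∑ i, y i * ((A i * X).trace - b i)) +
      σ / 2 * ∑ i, ((A i * X).trace - b i) ^ 2)
    (Y : Matrix (Fin n) (Fin p) ℝ)
    (X : Matrix (Fin n) (Fin n) ℝ) (hX : X = Y * Yᵀ)
    (S : Matrix (Fin n) (Fin n) ℝ)
    (hS : S = C - (∑ i, y i • A i) + σ • ∑ i, ((A i * X).trace - b i) • A i)
    (v : Fin n → ℝ) (hv : v ⬝ᵥ (S *ᵥ v) < 0) :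
    (∀ t : ℝ,
      Φ (appendCol Y (t • v) * (appendCol Y (t • v))ᵀ) =
        Φ X + t ^ 2 * (v ⬝ᵥ (S *ᵥ v))
          + σ / 2 * t ^ 4 * ∑ i, ((A i * Matrix.vecMulVec v v).trace) ^ 2) ∧
    ∃ ε > 0, ∀ t : ℝ, 0 < |t| → |t| < ε →
      Φ (appendCol Y (t • v) * (appendCol Y (t • v))ᵀ) < Φ X := by
  have hmul : ∀ t : ℝ, appendCol Y (t • v) * (appendCol Y (t • v))ᵀ
      = X + (t ^ 2) • Matrix.vecMulVec v v := by
    intro t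
    rw [hX]
    ext i j
    simp [appendCol, Matrix.mul_apply, Fin.sum_univ_castSucc, Matrix.vecMulVec_apply]
    ring
  have hdot : ∀ M : Matrix (Fin n) (Fin n) ℝ,
      v ⬝ᵥ M *ᵥ v = (M * Matrix.vecMulVec v v).trace := by
    intro M
    simp only [Matrix.trace, dotProduct, Matrix.mulVec, Matrix.mul_apply,
      Matrix.vecMulVec_apply, Matrix.diag_apply, Finset.mul_sum]
    apply Finset.sum_congr rfl
    intro i _
    apply Finset.sum_congr rfl
    intro j _
    ring
  have hquad : v ⬝ᵥ S *ᵥ v = (C * Matrix.vecMulVec v v).trace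
      - ∑ i, y i * (A i * Matrix.vecMulVec v v).trace
      + σ * ∑ i, ((A i * X).trace - b i) * (A i * Matrix.vecMulVec v v).trace := by
    rw [hdot, hS]
    simp [Matrix.sub_mul, Matrix.add_mul, Matrix.smul_mul, Matrix.sum_mul,
      Matrix.trace_sub, Matrix.trace_add, Matrix.trace_smul, Matrix.trace_sum,
      smul_eq_mul, Finset.mul_sum]
  have main : ∀ t : ℝ,
      Φ (appendCol Y (t • v) * (appendCol Y (t • v))ᵀ) =
        Φ X + t ^ 2 * (v ⬝ᵥ (S *ᵥ v))
          + σ / 2 * t ^ 4 * ∑ i, ((A i * Matrix.vecMulVec v v).trace) ^ 2 := by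
    intro t
    rw [hmul t, hΦ, hΦ, hquad]
    have htr : ∀ M : Matrix (Fin n) (Fin n) ℝ,
        (M * (X + (t ^ 2) • Matrix.vecMulVec v v)).trace
          = (M * X).trace + t ^ 2 * (M * Matrix.vecMulVec v v).trace := by
      intro M
      simp [Matrix.mul_add, Matrix.mul_smul]
    simp only [htr]
    have h1 : ∑ i, y i * ((A i * X).trace + t ^ 2 * (A i * Matrix.vecMulVec v v).trace - b i)
        = (∑ i, y i * ((A i * X).trace - b i))
          + t ^ 2 * ∑ i, y i * (A i * Matrix.vecMulVec v v).trace := by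
      rw [Finset.mul_sum, ← Finset.sum_add_distrib]
      apply Finset.sum_congr rfl
      intro i _; ring
    have h2 : ∑ i, ((A i * X).trace + t ^ 2 * (A i * Matrix.vecMulVec v v).trace - b i) ^ 2
        = (∑ i, ((A i * X).trace - b i) ^ 2)
          + 2 * t ^ 2 * ∑ i, ((A i * X).trace - b i) * (A i * Matrix.vecMulVec v v).trace
          + t ^ 4 * ∑ i, ((A i * Matrix.vecMulVec v v).trace) ^ 2 := by
      rw [Finset.mul_sum, Finset.mul_sum, ← Finset.sum_add_distrib, ← Finset.sum_add_distrib]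
      apply Finset.sum_congr rfl
      intro i _; ring
    rw [h1, h2]
    ring
  refine ⟨main, ?_⟩
  set q := v ⬝ᵥ S *ᵥ v with hq
  set K := σ / 2 * ∑ i, ((A i * Matrix.vecMulVec v v).trace) ^ 2 with hKdef
  have hK : 0 ≤ K := by
    apply mul_nonneg (by linarith)
    exact Finset.sum_nonneg fun i _ => sq_nonneg _
  have hεpos : 0 < Real.sqrt (-q / (K + 1)) := by
    apply Real.sqrt_pos.mpr
    have h1 : 0 < -q := by linarith
    exact div_pos h1 (by linarith)
  refine ⟨Real.sqrt (-q / (K + 1)), hεpos, ?_⟩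
  intro t ht hte
  have ht2pos : 0 < t ^ 2 := by
    have : t ≠ 0 := by
      intro h; rw [h] at ht; simp at ht
    positivity
  have hdivpos : (0:ℝ) < -q / (K + 1) := by
    have h1 : (0:ℝ) < -q := by linarith
    have h2 : (0:ℝ) < K + 1 := by linarith
    exact div_pos h1 h2
  have ht2 : t ^ 2 < -q / (K + 1) := by
    have h3 : |t| ^ 2 < Real.sqrt (-q / (K + 1)) ^ 2 := by
      apply pow_lt_pow_left₀ hte (abs_nonneg t)
      norm_num
    rw [sq_abs] at h3
    rwa [Real.sq_sqrt hdivpos.le] at h3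
  have hlt : t ^ 2 * (K + 1) < -q := by
    rwa [lt_div_iff₀ (by linarith : (0:ℝ) < K + 1)] at ht2
  rw [main t]
  have ht4 : t ^ 4 = t ^ 2 * t ^ 2 := by ring
  have hKt : σ / 2 * t ^ 4 * ∑ i, ((A i * Matrix.vecMulVec v v).trace) ^ 2
      = t ^ 2 * (t ^ 2 * K) := by rw [hKdef]; ring
  nlinarith [mul_pos ht2pos ht2pos, mul_nonneg (le_of_lt ht2pos) hK]
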